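/- In a finite dimensional normed space Y, every closed convex salient cone K (i.e., K ∩ (−K) ⊆ {0}) is sharp, i.e., the dual cone K° := {φ ∈ Y* : φ ≥ 0 on K} has nonempty interior. -/

import Mathlib

open scoped RealInnerProductSpace

/-- In a finite dimensional normed space, every closed convex salient cone is sharp. -/
theorem salient_cone_sharp {Y : Type*} [NormedAddCommGroup Y] [NormedSpace ℝ Y]
    [FiniteDimensional ℝ Y]
    (K : Set Y) (hKclosed : IsClosed K) (hKconv : Convex ℝ K) (hK0 : (0:Y) ∈ K)
    (hKcone : ∀ y ∈ K, ∀ c : ℝ, 0 ≤ c → c • y ∈ K)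
    (hsalient : ∀ y, y ∈ K → -y ∈ K → y = 0) :
    (interior {φ : Y →L[ℝ] ℝ | ∀ y ∈ K, 0 ≤ φ y}).Nonempty := by
  classical
  -- K is closed under addition
  have hKadd : ∀ a ∈ K, ∀ b ∈ K, a + b ∈ K := by
    intro a ha b hb
    have h2 : (1/2:ℝ) • a + (1/2:ℝ) • b ∈ K :=
      hKconv ha hb (by norm_num) (by norm_num) (by norm_num)
    have h3 := hKcone _ h2 2 (by norm_num)
    have : (2:ℝ) • ((1/2:ℝ) • a + (1/2:ℝ) • b) = a + b := by
      rw [smul_add, smul_smul, smul_smul]; norm_num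
    rwa [this] at h3
  -- move to a Euclidean space
  set H := EuclideanSpace ℝ (Fin (Module.finrank ℝ Y)) with hH
  let e : Y ≃L[ℝ] H := toEuclidean
  set K' : Set H := e '' K with hK'
  have hK'0 : (0:H) ∈ K' := ⟨0, hK0, map_zero e⟩
  have hK'closed : IsClosed K' := e.toHomeomorph.isClosedMap _ hKclosed
  -- build a ConvexCone structure on K'
  let C : ConvexCone ℝ H :=
    { carrier := K'
      smul_mem' := by
        rintro c hc x ⟨y, hy, rfl⟩
        exact ⟨c • y, hKcone y hy c hc.le, map_smul e c y⟩
      add_mem' := by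
        rintro x ⟨y, hy, rfl⟩ x' ⟨y', hy', rfl⟩
        exact ⟨y + y', hKadd y hy y' hy', map_add e y y'⟩ }
  have hC : (C : Set H) = K' := rfl
  have hC'salient : ∀ x : H, x ∈ K' → -x ∈ K' → x = 0 := by
    rintro x ⟨y, hy, rfl⟩ ⟨z, hz, hez⟩
    have hzy : z = -y := by
      apply e.injective
      rw [hez, map_neg]
    rw [hzy] at hz
    rw [hsalient y hy hz, map_zero]
  -- the bipolar theorem
  have hbip : ((ProperCone.innerDual (ProperCone.innerDual K' : Set H) : Set H)) = C := by
    let P : ProperCone ℝ H := ⟨C.toPointedCone hK'0, hK'closed⟩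
    exact congrArg (fun Q : ProperCone ℝ H => (Q : Set H)) (ProperCone.innerDual_innerDual P)
  -- the dual cone spans H
  have hspan : Submodule.span ℝ (ProperCone.innerDual K' : Set H) = ⊤ := by
    by_contra h
    have hne : (Submodule.span ℝ (ProperCone.innerDual K' : Set H))ᗮ ≠ ⊥ := by
      rw [Ne, Submodule.orthogonal_eq_bot_iff]
      exact h
    obtain ⟨v, hv, hv0⟩ := Submodule.exists_mem_ne_zero_of_ne_bot hne
    have hv' : ∀ d ∈ (ProperCone.innerDual K' : Set H), ⟪d, v⟫ = 0 := fun d hd =>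
      (Submodule.mem_orthogonal _ v).mp hv d (Submodule.subset_span hd)
    have hvK : v ∈ C := by
      rw [← SetLike.mem_coe, ← hbip]
      rw [SetLike.mem_coe, ProperCone.mem_innerDual]
      intro d hd
      exact le_of_eq (hv' d hd).symm
    have hvK' : -v ∈ C := by
      rw [← SetLike.mem_coe, ← hbip]
      rw [SetLike.mem_coe, ProperCone.mem_innerDual]
      intro d hd
      rw [inner_neg_right, hv' d hd, neg_zero]
    exact hv0 (hC'salient v hvK hvK')
  -- hence the affine span is everything
  have haff : affineSpan ℝ (ProperCone.innerDual K' : Set H) = ⊤ := by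
    rw [AffineSubspace.affineSpan_eq_top_iff_vectorSpan_eq_top_of_nonempty ℝ H H
      ⟨0, (ProperCone.mem_innerDual.mpr (fun x _ => by simp))⟩]
    rw [← top_le_iff, ← hspan]
    apply Submodule.span_le.mpr
    intro d hd
    have : d = d -ᵥ (0:H) := by simp
    rw [this]
    exact vsub_mem_vectorSpan ℝ hd ((ProperCone.mem_innerDual.mpr (fun x _ => by simp)))
  -- so the dual cone has an interior point w
  obtain ⟨w, hw⟩ :=
    (Convex.interior_nonempty_iff_affineSpan_eq_top ((ProperCone.innerDual K').convex)).mpr haff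
  obtain ⟨ε, hε, hball⟩ := Metric.mem_nhds_iff.mp (mem_interior_iff_mem_nhds.mp hw)
  -- w is uniformly positive on K'
  have hwpos : ∀ x ∈ K', ε / 2 * ‖x‖ ≤ ⟪x, w⟫ := by
    intro x hx
    rcases eq_or_ne x 0 with rfl | hx0
    · simp
    · have hxn : (0:ℝ) < ‖x‖ := norm_pos_iff.mpr hx0
      set u := w - (ε / 2 / ‖x‖) • x with hu
      have hub : u ∈ Metric.ball w ε := by
        rw [Metric.mem_ball, dist_eq_norm, hu]
        have : w - (ε / 2 / ‖x‖) • x - w = -((ε / 2 / ‖x‖) • x) := by abel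
        rw [this, norm_neg, norm_smul, Real.norm_eq_abs,
          abs_of_pos (by positivity : (0:ℝ) < ε / 2 / ‖x‖)]
        rw [div_mul_cancel₀ _ (ne_of_gt hxn)]
        linarith
      have huD : u ∈ (ProperCone.innerDual K' : Set H) := hball hub
      have h0 : (0:ℝ) ≤ ⟪x, u⟫ := ProperCone.mem_innerDual.mp huD hx
      rw [hu, inner_sub_right, inner_smul_right, real_inner_self_eq_norm_sq] at h0
      have hq : ε / 2 / ‖x‖ * (‖x‖ * ‖x‖) = ε / 2 * ‖x‖ := by
        field_simp
      nlinarith [h0]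
  -- transfer back to Y
  set φ : Y →L[ℝ] ℝ := (innerSL ℝ w).comp (e : Y →L[ℝ] H) with hφdef
  set C0 : ℝ := ‖(e.symm : H →L[ℝ] Y)‖ with hC0
  have hC0nn : 0 ≤ C0 := norm_nonneg _
  have hYle : ∀ y : Y, ‖y‖ ≤ C0 * ‖e y‖ := by
    intro y
    conv_lhs => rw [← e.symm_apply_apply y]
    exact (e.symm : H →L[ℝ] Y).le_opNorm (e y)
  set ρ : ℝ := ε / 2 / (C0 + 1) with hρdef
  have hρ : 0 < ρ := by positivity
  have hφpos : ∀ y ∈ K, ρ * ‖y‖ ≤ φ y := by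
    intro y hy
    have h1 : ‖y‖ ≤ C0 * ‖e y‖ := hYle y
    have h2 : ε / 2 * ‖e y‖ ≤ ⟪e y, w⟫ := hwpos (e y) ⟨y, hy, rfl⟩
    have h3 : φ y = ⟪e y, w⟫ := by
      simp [hφdef, real_inner_comm]
    have h4 : ρ * (C0 + 1) = ε / 2 := by
      rw [hρdef, div_mul_cancel₀]
      positivity
    have h5 : (0:ℝ) ≤ ‖e y‖ := norm_nonneg _
    nlinarith
  refine ⟨φ, mem_interior.mpr ⟨Metric.ball φ ρ, ?_, Metric.isOpen_ball, Metric.mem_ball_self hρ⟩⟩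
  intro ψ hψ y hy
  have hd : ‖φ - ψ‖ < ρ := by
    rw [← dist_eq_norm]
    exact Metric.mem_ball'.mp hψ
  have h1 : (φ - ψ) y ≤ ‖φ - ψ‖ * ‖y‖ :=
    (le_abs_self _).trans ((φ - ψ).le_opNorm y)
  have h2 : ‖φ - ψ‖ * ‖y‖ ≤ ρ * ‖y‖ :=
    mul_le_mul_of_nonneg_right hd.le (norm_nonneg y)
  have h3 : ρ * ‖y‖ ≤ φ y := hφpos y hy
  have h4 : (φ - ψ) y = φ y - ψ y := rfl
  linarith
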